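/- Let γ(u) = [[e^{2u}, 1],[1, e^{−2u}]] be the hyperbolic circle in ℚ³₊, so that γ̇(u) = [[2e^{2u}, 0],[0, −2e^{−2u}]] and ⟨γ̇(u), γ̇(u)⟩ = 4. Fix u ∈ ℝ. Then a Hermitian matrix V satisfies ⟨γ(u), V⟩ = 0, ⟨γ̇(u), V⟩ = 0 and ⟨V, V⟩ = 4 if and only if there exists α ∈ ℝ such that V = α·γ(u) + 2f₂ or V = α·γ(u) − 2f₂, where f₂ = [[0, i],[−i, 0]]. -/

import Mathlib

open Matrix

/-- The Lorentz inner product on 2×2 complex matrices, via determinant polarization. -/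
noncomputable def ip (V W : Matrix (Fin 2) (Fin 2) ℂ) : ℂ :=
  -(1 / 2) * ((V + W).det - V.det - W.det)

/-- The hyperbolic circle in the light cone. -/
noncomputable def γH (u : ℝ) : Matrix (Fin 2) (Fin 2) ℂ :=
  !![(Real.exp (2 * u) : ℂ), 1; 1, (Real.exp (-(2 * u)) : ℂ)]

/-- Its derivative. -/
noncomputable def γHdot (u : ℝ) : Matrix (Fin 2) (Fin 2) ℂ :=
  !![(2 * Real.exp (2 * u) : ℝ), 0; 0, (-(2 * Real.exp (-(2 * u))) : ℝ)]

/-- f₂ = [[0,i],[−i,0]]. -/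
noncomputable def f2 : Matrix (Fin 2) (Fin 2) ℂ := !![0, Complex.I; -Complex.I, 0]

lemma ip_eq' (V W : Matrix (Fin 2) (Fin 2) ℂ) :
    ip V W = -(1/2) * (V 0 0 * W 1 1 + V 1 1 * W 0 0 - V 0 1 * W 1 0 - V 1 0 * W 0 1) := by
  simp [ip, Matrix.det_fin_two, Matrix.add_apply]
  ring

theorem hyperbolic_circle_tangent_fields (u : ℝ) :
    (∀ i j : Fin 2, HasDerivAt (fun u' => γH u' i j) (γHdot u i j) u) ∧
    ip (γHdot u) (γHdot u) = 4 ∧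
    ∀ V : Matrix (Fin 2) (Fin 2) ℂ,
      (V.IsHermitian ∧ ip (γH u) V = 0 ∧ ip (γHdot u) V = 0 ∧ ip V V = 4)
      ↔ ∃ α : ℝ, V = (α : ℂ) • γH u + (2 : ℂ) • f2 ∨ V = (α : ℂ) • γH u - (2 : ℂ) • f2 := by
  refine ⟨?_, ?_, ?_⟩
  · intro i j
    have h2u : HasDerivAt (fun u' : ℝ => 2 * u') 2 u := by
      simpa using (hasDerivAt_id u).const_mul 2
    have hn2u : HasDerivAt (fun u' : ℝ => -(2 * u')) (-2) u := h2u.neg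
    have hexp : HasDerivAt (fun u' : ℝ => Real.exp (2 * u')) (2 * Real.exp (2*u)) u := by
      simpa [mul_comm] using h2u.exp
    have hexpn : HasDerivAt (fun u' : ℝ => Real.exp (-(2 * u'))) (-(2 * Real.exp (-(2*u)))) u := by
      simpa [mul_comm] using hn2u.exp
    fin_cases i <;> fin_cases j <;>
      simp only [γH, γHdot, Matrix.cons_val', Matrix.cons_val_zero, Matrix.cons_val_one,
        Matrix.head_cons, Matrix.head_fin_const, Matrix.empty_val', Matrix.cons_val_fin_one,
        Fin.isValue, Fin.zero_eta, Fin.mk_one]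
    · exact hexp.ofReal_comp
    · simpa using hasDerivAt_const u (1 : ℂ)
    · simpa using hasDerivAt_const u (1 : ℂ)
    · exact hexpn.ofReal_comp
  · have hEFe : Complex.exp (2*(u:ℂ)) * Complex.exp (-(2*(u:ℂ))) = 1 := by
      rw [← Complex.exp_add]; simp
    rw [ip_eq']
    simp [γHdot]
    linear_combination 4 * hEFe
  · intro V
    have hEF : Real.exp (2*u) * Real.exp (-(2*u)) = 1 := by rw [← Real.exp_add]; simp
    have hEFc : (Real.exp (2*u) : ℂ) * (Real.exp (-(2*u)) : ℂ) = 1 := by exact_mod_cast hEF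
    have hEFe : Complex.exp (2*(u:ℂ)) * Complex.exp (-(2*(u:ℂ))) = 1 := by
      rw [← Complex.exp_add]; simp
    have g00 : γH u 0 0 = (Real.exp (2*u) : ℂ) := by simp [γH]
    have g01 : γH u 0 1 = 1 := by simp [γH]
    have g10 : γH u 1 0 = 1 := by simp [γH]
    have g11 : γH u 1 1 = (Real.exp (-(2*u)) : ℂ) := by simp [γH]
    have d00 : γHdot u 0 0 = (2 * Real.exp (2*u) : ℝ) := by simp [γHdot]
    have d01 : γHdot u 0 1 = 0 := by simp [γHdot]
    have d10 : γHdot u 1 0 = 0 := by simp [γHdot]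
    have d11 : γHdot u 1 1 = ((-(2 * Real.exp (-(2*u)))) : ℝ) := by simp [γHdot]
    constructor
    · rintro ⟨hH, h1, h2, h3⟩
      rw [ip_eq', g00, g01, g10, g11] at h1
      rw [ip_eq', d00, d01, d10, d11] at h2
      rw [ip_eq'] at h3
      have hc : V 1 0 = (starRingEnd ℂ) (V 0 1) := (hH.apply 1 0).symm
      have hVa : V 0 0 = ((V 0 0).re : ℂ) := by
        have h := hH.apply 0 0
        rw [Complex.star_def] at h
        exact (Complex.conj_eq_iff_re.mp h).symm
      have hVd : V 1 1 = ((V 1 1).re : ℂ) := by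
        have h := hH.apply 1 1
        rw [Complex.star_def] at h
        exact (Complex.conj_eq_iff_re.mp h).symm
      set a := (V 0 0).re with hadef
      set d := (V 1 1).re with hddef
      set p := (V 0 1).re with hpdef
      set q := (V 0 1).im with hqdef
      have hVb : V 0 1 = (p : ℂ) + (q : ℂ) * Complex.I := by
        apply Complex.ext <;> simp [hpdef, hqdef]
      rw [hVa, hVd, hc, hVb] at h1 h2 h3
      have C2 : (Real.exp (2*u) : ℂ) * d = (Real.exp (-(2*u)) : ℂ) * a := by
        push_cast [-Complex.ofReal_exp] at h2 ⊢
        linear_combination -h2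
      have C1 : (Real.exp (2*u) : ℂ) * d + (Real.exp (-(2*u)) : ℂ) * a = 2 * p := by
        simp only [map_add, _root_.map_mul, Complex.conj_ofReal, Complex.conj_I] at h1
        linear_combination -2 * h1
      have C3 : (p:ℂ)^2 + (q:ℂ)^2 - (a:ℂ)*(d:ℂ) = 4 := by
        simp only [map_add, _root_.map_mul, Complex.conj_ofReal, Complex.conj_I] at h3
        linear_combination h3 + (q:ℂ)^2 * Complex.I_sq
      have C2r : Real.exp (2*u) * d = Real.exp (-(2*u)) * a := by exact_mod_cast C2
      have C1r : Real.exp (2*u) * d + Real.exp (-(2*u)) * a = 2 * p := by exact_mod_cast C1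
      have C3r : p^2 + q^2 - a*d = 4 := by exact_mod_cast C3
      have hp : p = Real.exp (-(2*u)) * a := by linarith
      have had : a * d = p^2 := by
        linear_combination a * Real.exp (-(2*u)) * C2r - a*d*hEF - (p + Real.exp (-(2*u))*a) * hp
      have hq : q = 2 ∨ q = -2 := by
        have h4 : (q - 2) * (q + 2) = 0 := by nlinarith
        rcases mul_eq_zero.mp h4 with h | h
        · left; linarith
        · right; linarith
      have hpE : p * Real.exp (2*u) = a := by
        linear_combination Real.exp (2*u) * hp + a * hEF
      have hpF : p * Real.exp (-(2*u)) = d := by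
        have hEpos : 0 < Real.exp (2*u) := Real.exp_pos _
        have h5 : Real.exp (2*u) * (p * Real.exp (-(2*u))) = Real.exp (2*u) * d := by
          linear_combination Real.exp (-(2*u)) * hpE - C2r
        exact mul_left_cancel₀ (ne_of_gt hEpos) h5
      refine ⟨p, ?_⟩
      rcases hq with hq | hq
      · left
        ext i j
        fin_cases i <;> fin_cases j <;>
          simp [Matrix.add_apply, Matrix.smul_apply, g00, g01, g10, g11, f2]
        · rw [hVa]; have hx := congrArg (fun x : ℝ => (x:ℂ)) hpE.symm; push_cast at hx; linear_combination hx
        · rw [hVb, hq]; push_cast; ring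
        · rw [hc, hVb, hq]; simp [map_add, _root_.map_mul, Complex.conj_I, Complex.conj_ofReal, map_ofNat]
        · rw [hVd]; have hx := congrArg (fun x : ℝ => (x:ℂ)) hpF.symm; push_cast at hx; linear_combination hx
      · right
        ext i j
        fin_cases i <;> fin_cases j <;>
          simp [Matrix.sub_apply, Matrix.smul_apply, g00, g01, g10, g11, f2]
        · rw [hVa]; have hx := congrArg (fun x : ℝ => (x:ℂ)) hpE.symm; push_cast at hx; linear_combination hx
        · rw [hVb, hq]; push_cast; ring
        · rw [hc, hVb, hq]; simp [map_add, _root_.map_mul, Complex.conj_I, Complex.conj_ofReal, map_ofNat]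
        · rw [hVd]; have hx := congrArg (fun x : ℝ => (x:ℂ)) hpF.symm; push_cast at hx; linear_combination hx
    · rintro ⟨α, h | h⟩ <;> subst h <;>
        refine ⟨?_, ?_, ?_, ?_⟩
      · ext i j
        fin_cases i <;> fin_cases j <;>
          simp [Matrix.conjTranspose_apply, Matrix.add_apply, Matrix.smul_apply, γH, f2,
            Complex.ext_iff, -Complex.ofReal_exp]
      · rw [ip_eq']
        simp [Matrix.add_apply, Matrix.smul_apply, g00, g01, g10, g11, f2]
        push_cast
        linear_combination 2 * (α : ℂ) * hEFe
      · rw [ip_eq']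
        simp [Matrix.add_apply, Matrix.smul_apply, d00, d01, d10, d11, g00, g01, g10, g11, f2]
        push_cast
        ring
      · rw [ip_eq']
        simp [Matrix.add_apply, Matrix.smul_apply, g00, g01, g10, g11, f2]
        push_cast
        linear_combination -(α:ℂ)^2 * hEFe - 4 * Complex.I_sq
      · ext i j
        fin_cases i <;> fin_cases j <;>
          simp [Matrix.conjTranspose_apply, Matrix.sub_apply, Matrix.smul_apply, γH, f2,
            Complex.ext_iff, -Complex.ofReal_exp]
      · rw [ip_eq']
        simp [Matrix.sub_apply, Matrix.smul_apply, g00, g01, g10, g11, f2]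
        push_cast
        linear_combination 2 * (α : ℂ) * hEFe
      · rw [ip_eq']
        simp [Matrix.sub_apply, Matrix.smul_apply, d00, d01, d10, d11, g00, g01, g10, g11, f2]
        push_cast
        ring
      · rw [ip_eq']
        simp [Matrix.sub_apply, Matrix.smul_apply, g00, g01, g10, g11, f2]
        push_cast
        linear_combination -(α:ℂ)^2 * hEFe - 4 * Complex.I_sq
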